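/- There exists a separable 2⊗3 state that is not SPPT: the state ϱ₁ = [[ρ₁₁, ρ₁₂],[ρ₁₂†, ρ₂₂]] with ρ₁₁ = [[3,0,0],[0,4,2],[0,2,3]], ρ₁₂ = [[0,0,0],[0,0,1],[1,−1,0]], ρ₂₂ = [[2,1,−1],[1,6,1],[−1,1,3]] is separable (being a 2⊗3 PPT state) but there exist no 3×3 matrices X₁, X₂, S with X₁†S†SX₁ = X₁†SS†X₁, ρ₁₁ = X₁†X₁, ρ₁₂ = X₁†SX₁, ρ₂₂ = X₁†S†SX₁ + X₂†X₂. -/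

import Mathlib

set_option maxHeartbeats 4000000

open Matrix Kronecker Finset ComplexOrder

/-- 2x2 block matrix with n×n blocks, indexed by `Fin 2 × n`. -/
def blk {n : Type*} (A B C D : Matrix n n ℂ) :
    Matrix (Fin 2 × n) (Fin 2 × n) ℂ := fun p q =>
  if p.1 = 0 then (if q.1 = 0 then A p.2 q.2 else B p.2 q.2)
  else (if q.1 = 0 then C p.2 q.2 else D p.2 q.2)

/-- Partial transpose on the first (qubit) factor. -/
def ptA {n : Type*} (ρ : Matrix (Fin 2 × n) (Fin 2 × n) ℂ) :
    Matrix (Fin 2 × n) (Fin 2 × n) ℂ := fun p q => ρ (q.1, p.2) (p.1, q.2)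

/-- Separability of an (unnormalized) state on ℂ²⊗ℂⁿ. -/
def SepState {n : Type*} [Fintype n] (ρ : Matrix (Fin 2 × n) (Fin 2 × n) ℂ) : Prop :=
  ∃ (N : ℕ) (σ : Fin N → Matrix (Fin 2) (Fin 2) ℂ) (P : Fin N → Matrix n n ℂ),
    (∀ i, (σ i).PosSemidef) ∧ (∀ i, (P i).PosSemidef) ∧ ρ = ∑ i, σ i ⊗ₖ P i

lemma psd1 : (blk !![3, 0, 0; 0, 4, 2; 0, 2, 3] !![0, 0, 0; 0, 0, 1; 1, -1, 0]
    !![0, 0, 0; 0, 0, 1; 1, -1, 0]ᴴ !![2, 1, -1; 1, 6, 1; -1, 1, 3]).PosSemidef := by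
  have key : blk !![3, 0, 0; 0, 4, 2; 0, 2, 3] !![0, 0, 0; 0, 0, 1; 1, -1, 0]
      !![0, 0, 0; 0, 0, 1; 1, -1, 0]ᴴ !![2, 1, -1; 1, 6, 1; -1, 1, 3]
      = (blk !![1,0,0; 0,1,1/2; 0,0,1] !![0,0,0; 0,0,1/4; 1/2,-1/2,-1/4]
          0 !![1,1,-1/2; 0,1,3/8; 0,0,1])ᴴ *
        Matrix.diagonal (fun p : Fin 2 × Fin 3 =>
          if p.1 = 0 then ![3,4,2] p.2 else ![3/2,4,27/16] p.2) *
        (blk !![1,0,0; 0,1,1/2; 0,0,1] !![0,0,0; 0,0,1/4; 1/2,-1/2,-1/4]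
          0 !![1,1,-1/2; 0,1,3/8; 0,0,1]) := by
    ext ⟨i, j⟩ ⟨k, l⟩
    fin_cases i <;> fin_cases k <;> fin_cases j <;> fin_cases l <;>
      simp [blk, Matrix.mul_apply, Fintype.sum_prod_type, Fin.sum_univ_succ,
        Matrix.diagonal] <;> norm_num [Matrix.vecHead, Matrix.vecTail, Complex.conj_ofNat]
  rw [key]
  exact (Matrix.posSemidef_diagonal_iff.mpr (by
    rintro ⟨i, j⟩
    fin_cases i <;> fin_cases j <;> norm_num [Complex.le_def])).conjTranspose_mul_mul_same _

lemma psd2 : (ptA (blk !![3, 0, 0; 0, 4, 2; 0, 2, 3] !![0, 0, 0; 0, 0, 1; 1, -1, 0]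
    !![0, 0, 0; 0, 0, 1; 1, -1, 0]ᴴ !![2, 1, -1; 1, 6, 1; -1, 1, 3])).PosSemidef := by
  have key : ptA (blk !![3, 0, 0; 0, 4, 2; 0, 2, 3] !![0, 0, 0; 0, 0, 1; 1, -1, 0]
      !![0, 0, 0; 0, 0, 1; 1, -1, 0]ᴴ !![2, 1, -1; 1, 6, 1; -1, 1, 3])
      = (blk !![1,0,0; 0,1,1/2; 0,0,1] !![0,0,1/3; 0,0,-1/4; 0,1/2,1/4]
          0 !![1,1/2,-1/2; 0,1,1/4; 0,0,1])ᴴ *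
        Matrix.diagonal (fun p : Fin 2 × Fin 3 =>
          if p.1 = 0 then ![3,4,2] p.2 else ![2,5,71/48] p.2) *
        (blk !![1,0,0; 0,1,1/2; 0,0,1] !![0,0,1/3; 0,0,-1/4; 0,1/2,1/4]
          0 !![1,1/2,-1/2; 0,1,1/4; 0,0,1]) := by
    ext ⟨i, j⟩ ⟨k, l⟩
    fin_cases i <;> fin_cases k <;> fin_cases j <;> fin_cases l <;>
      simp [ptA, blk, Matrix.mul_apply, Fintype.sum_prod_type, Fin.sum_univ_succ,
        Matrix.diagonal] <;> norm_num [Matrix.vecHead, Matrix.vecTail, Complex.conj_ofNat]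
  rw [key]
  exact (Matrix.posSemidef_diagonal_iff.mpr (by
    rintro ⟨i, j⟩
    fin_cases i <;> fin_cases j <;> norm_num [Complex.le_def])).conjTranspose_mul_mul_same _

theorem stmt17 (ρ₁₁ ρ₁₂ ρ₂₂ : Matrix (Fin 3) (Fin 3) ℂ)
    (h11 : ρ₁₁ = !![3, 0, 0; 0, 4, 2; 0, 2, 3])
    (h12 : ρ₁₂ = !![0, 0, 0; 0, 0, 1; 1, -1, 0])
    (h22 : ρ₂₂ = !![2, 1, -1; 1, 6, 1; -1, 1, 3])
    (horodecki : ∀ τ : Matrix (Fin 2 × Fin 3) (Fin 2 × Fin 3) ℂ,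
        τ.PosSemidef → (ptA τ).PosSemidef → SepState τ) :
    SepState (blk ρ₁₁ ρ₁₂ ρ₁₂ᴴ ρ₂₂) ∧
    ¬ ∃ X₁ X₂ S : Matrix (Fin 3) (Fin 3) ℂ,
        X₁ᴴ * Sᴴ * S * X₁ = X₁ᴴ * S * Sᴴ * X₁ ∧
        ρ₁₁ = X₁ᴴ * X₁ ∧ ρ₁₂ = X₁ᴴ * S * X₁ ∧
        ρ₂₂ = X₁ᴴ * Sᴴ * S * X₁ + X₂ᴴ * X₂ := by
  subst h11 h12 h22
  constructor
  · exact horodecki _ psd1 psd2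
  · rintro ⟨X₁, X₂, S, hcomm, hρ11, hρ12, -⟩
    -- X₁ is invertible
    have hdet24 : (X₁ᴴ * X₁).det = 24 := by
      rw [← hρ11]
      simp [Matrix.det_fin_three]; norm_num
    have hdet : IsUnit X₁.det := by
      refine isUnit_iff_ne_zero.mpr fun h => ?_
      rw [Matrix.det_mul, Matrix.det_conjTranspose, h, star_zero, zero_mul] at hdet24
      norm_num at hdet24
    have hdetH : IsUnit X₁ᴴ.det := by
      rw [Matrix.det_conjTranspose]
      exact hdet.star
    -- S * X₁ and Sᴴ * X₁ in terms of ρ's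
    have hSX : S * X₁ = X₁ᴴ⁻¹ * !![0, 0, 0; 0, 0, 1; 1, -1, 0] := by
      rw [hρ12]
      simp only [← Matrix.mul_assoc]
      rw [Matrix.nonsing_inv_mul _ hdetH, Matrix.one_mul]
    have hρ12H : !![0, 0, 0; 0, 0, 1; 1, -1, 0]ᴴ = X₁ᴴ * Sᴴ * X₁ := by
      rw [hρ12]
      simp only [Matrix.conjTranspose_mul, Matrix.conjTranspose_conjTranspose,
        Matrix.mul_assoc]
    have hSHX : Sᴴ * X₁ = X₁ᴴ⁻¹ * !![0, 0, 0; 0, 0, 1; 1, -1, 0]ᴴ := by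
      rw [hρ12H]
      simp only [← Matrix.mul_assoc]
      rw [Matrix.nonsing_inv_mul _ hdetH, Matrix.one_mul]
    -- the inverse of ρ₁₁
    have hXinv : X₁⁻¹ * X₁ᴴ⁻¹ = !![1/3,0,0; 0,3/8,-1/4; 0,-1/4,1/2] := by
      have h1 : X₁⁻¹ * X₁ᴴ⁻¹ = (X₁ᴴ * X₁)⁻¹ := (Matrix.mul_inv_rev _ _).symm
      have h2 : (X₁ᴴ * X₁)⁻¹ = !![1/3,0,0; 0,3/8,-1/4; 0,-1/4,1/2] := by
        apply Matrix.inv_eq_right_inv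
        rw [← hρ11]
        ext i j
        fin_cases i <;> fin_cases j <;>
          simp [Matrix.mul_apply, Fin.sum_univ_succ, Matrix.one_apply] <;> norm_num
      rw [h1, h2]
    -- rewrite both sides of hcomm
    have e1 : X₁ᴴ * Sᴴ * S * X₁
        = !![0, 0, 0; 0, 0, 1; 1, -1, 0]ᴴ * (!![1/3,0,0; 0,3/8,-1/4; 0,-1/4,1/2]
            * !![0, 0, 0; 0, 0, 1; 1, -1, 0]) := by
      have : X₁ᴴ * Sᴴ * S * X₁ = (S * X₁)ᴴ * (S * X₁) := by
        simp only [Matrix.conjTranspose_mul, Matrix.mul_assoc]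
      rw [this, hSX]
      simp only [Matrix.conjTranspose_mul, Matrix.conjTranspose_nonsing_inv,
        Matrix.conjTranspose_conjTranspose, Matrix.mul_assoc]
      rw [← Matrix.mul_assoc X₁⁻¹, hXinv]
    have e2 : X₁ᴴ * S * Sᴴ * X₁
        = !![0, 0, 0; 0, 0, 1; 1, -1, 0] * (!![1/3,0,0; 0,3/8,-1/4; 0,-1/4,1/2]
            * !![0, 0, 0; 0, 0, 1; 1, -1, 0]ᴴ) := by
      have : X₁ᴴ * S * Sᴴ * X₁ = (Sᴴ * X₁)ᴴ * (Sᴴ * X₁) := by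
        simp only [Matrix.conjTranspose_mul, Matrix.conjTranspose_conjTranspose,
          Matrix.mul_assoc]
      rw [this, hSHX]
      simp only [Matrix.conjTranspose_mul, Matrix.conjTranspose_nonsing_inv,
        Matrix.conjTranspose_conjTranspose, Matrix.mul_assoc]
      rw [← Matrix.mul_assoc X₁⁻¹, hXinv]
    rw [e1, e2] at hcomm
    have h00 := congrFun (congrFun hcomm 0) 0
    simp [Matrix.mul_apply, Fin.sum_univ_succ] at h00
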